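/- Let P, Q, N > 0 with P < Q and suppose −1 + ρ2² + ρ4² ≤ 0, −1 + ρ3² + ρ5² ≤ 0, and Nρ2² + Pρ2²(1−ρ3²) − Pρ5²(1−ρ4²) ≤ 0, with ρ4² < 1. Then F(ρ2,ρ3,ρ4,ρ5) = [−Pρ2²ρ3² − (Q + 2ρ3√(PQ))(−1 + ρ2² + ρ4²) + P(1−ρ4²)(1−ρ5²)]/(1−ρ4²) satisfies F ≥ N(Q − N − P)/(N + P) whenever (P+N)² ≤ QP, and F ≥ (√Q − √P)² whenever (P+N)² > QP. -/

import Mathlib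

open Real

set_option maxHeartbeats 1600000 in
/-- Core optimization lower bound (Case 2 of the main theorem): under the
constraints `−1+ρ2²+ρ4² ≤ 0`, `−1+ρ3²+ρ5² ≤ 0`,
`Nρ2² + Pρ2²(1−ρ3²) − Pρ5²(1−ρ4²) ≤ 0` and `ρ4² < 1`, the objective
`F = [−Pρ2²ρ3² − (Q+2ρ3√(PQ))(−1+ρ2²+ρ4²) + P(1−ρ4²)(1−ρ5²)]/(1−ρ4²)` satisfies
`F ≥ N(Q−N−P)/(N+P)` when `(P+N)² ≤ QP`, and `F ≥ (√Q−√P)²` when `(P+N)² > QP`. -/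
theorem F_lower_bound
    (P Q N ρ2 ρ3 ρ4 ρ5 : ℝ) (hP : 0 < P) (hQ : 0 < Q) (hN : 0 < N) (hPQ : P < Q)
    (hρ2 : ρ2 ∈ Set.Icc (-1 : ℝ) 1) (hρ3 : ρ3 ∈ Set.Icc (-1 : ℝ) 1)
    (hρ4 : ρ4 ∈ Set.Icc (-1 : ℝ) 1) (hρ5 : ρ5 ∈ Set.Icc (-1 : ℝ) 1)
    (hc1 : -1 + ρ2 ^ 2 + ρ4 ^ 2 ≤ 0)
    (hc2 : -1 + ρ3 ^ 2 + ρ5 ^ 2 ≤ 0)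
    (hc3 : N * ρ2 ^ 2 + P * ρ2 ^ 2 * (1 - ρ3 ^ 2) - P * ρ5 ^ 2 * (1 - ρ4 ^ 2) ≤ 0)
    (hρ4sq : ρ4 ^ 2 < 1) :
    (((P + N) ^ 2 ≤ Q * P) →
      N * (Q - N - P) / (N + P) ≤
        (-(P * ρ2 ^ 2 * ρ3 ^ 2) -
            (Q + 2 * ρ3 * Real.sqrt (P * Q)) * (-1 + ρ2 ^ 2 + ρ4 ^ 2) +
            P * (1 - ρ4 ^ 2) * (1 - ρ5 ^ 2)) / (1 - ρ4 ^ 2)) ∧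
    (((P + N) ^ 2 > Q * P) →
      (Real.sqrt Q - Real.sqrt P) ^ 2 ≤
        (-(P * ρ2 ^ 2 * ρ3 ^ 2) -
            (Q + 2 * ρ3 * Real.sqrt (P * Q)) * (-1 + ρ2 ^ 2 + ρ4 ^ 2) +
            P * (1 - ρ4 ^ 2) * (1 - ρ5 ^ 2)) / (1 - ρ4 ^ 2)) := by
  have hD0 : (0:ℝ) < 1 - ρ4 ^ 2 := by linarith
  have ha2 : Real.sqrt P ^ 2 = P := Real.sq_sqrt hP.le
  have hb2 : Real.sqrt Q ^ 2 = Q := Real.sq_sqrt hQ.le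
  have hsPQ : Real.sqrt (P * Q) = Real.sqrt P * Real.sqrt Q := Real.sqrt_mul hP.le Q
  rw [hsPQ]
  set a := Real.sqrt P with ha_def
  set b := Real.sqrt Q with hb_def
  have ha0 : 0 < a := Real.sqrt_pos.mpr hP
  have hb0 : 0 < b := Real.sqrt_pos.mpr hQ
  have hab : a < b := Real.sqrt_lt_sqrt hP.le hPQ
  set r := |ρ3| with hr_def
  have hr0 : 0 ≤ r := abs_nonneg _
  have hr2 : r ^ 2 = ρ3 ^ 2 := sq_abs _
  have hr1 : r ≤ 1 := abs_le.mpr ⟨hρ3.1, hρ3.2⟩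
  have hρ3r : 0 ≤ ρ3 + r := by
    have := neg_abs_le ρ3
    simp only [← hr_def] at this
    linarith
  set s := ρ2 ^ 2 with hs_def
  set v := ρ5 ^ 2 with hv_def
  set D := (1:ℝ) - ρ4 ^ 2 with hD_def
  have hs0 : 0 ≤ s := sq_nonneg _
  have hv0 : 0 ≤ v := sq_nonneg _
  have hDs : 0 ≤ D - s := by rw [hD_def]; simp only [hs_def]; linarith
  have h1vr : 0 ≤ 1 - v - r ^ 2 := by rw [hr2]; simp only [hv_def]; linarith
  set M := N + a ^ 2 * (1 - r ^ 2) with hM_def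
  clear_value a b r s v D M
  have hM0 : 0 < M := by
    rw [hM_def]
    nlinarith [sq_nonneg a]
  have hc3' : N * s + a ^ 2 * s * (1 - r ^ 2) - a ^ 2 * v * D ≤ 0 := by
    rw [hr2, ha2]; linarith [hc3]
  have h3' : s * M ≤ a ^ 2 * (1 - r ^ 2) * D := by
    have h1 : a ^ 2 * v * D ≤ a ^ 2 * (1 - r ^ 2) * D := by
      nlinarith [mul_nonneg (mul_nonneg (sq_nonneg a) h1vr) hD0.le]
    rw [hM_def]; nlinarith
  have hDsM : D * N ≤ (D - s) * M := by
    have : (D - s) * M - D * N = a ^ 2 * (1 - r ^ 2) * D - s * M := by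
      rw [hM_def]; ring
    linarith [h3']
  have hXG : (b - r * a) ^ 2 * (D - s) ≤
      -(a ^ 2 * s * r ^ 2) + (b ^ 2 + 2 * ρ3 * (a * b)) * (D - s) + a ^ 2 * D * (1 - v) := by
    have k1 : 0 ≤ a * b * (ρ3 + r) * (D - s) :=
      mul_nonneg (mul_nonneg (mul_nonneg ha0.le hb0.le) hρ3r) hDs
    have k2 : 0 ≤ a ^ 2 * D * (1 - v - r ^ 2) :=
      mul_nonneg (mul_nonneg (sq_nonneg a) hD0.le) h1vr
    have id0 : (-(a ^ 2 * s * r ^ 2) + (b ^ 2 + 2 * ρ3 * (a * b)) * (D - s)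
        + a ^ 2 * D * (1 - v)) - (b - r * a) ^ 2 * (D - s)
        = 2 * (a * b * (ρ3 + r) * (D - s)) + a ^ 2 * D * (1 - v - r ^ 2) := by ring
    linarith [k1, k2, id0]
  have hXg : (-(P * s * ρ3 ^ 2) - (Q + 2 * ρ3 * (a * b)) * (-1 + s + ρ4 ^ 2) + P * D * (1 - v))
      = -(a ^ 2 * s * r ^ 2) + (b ^ 2 + 2 * ρ3 * (a * b)) * (D - s) + a ^ 2 * D * (1 - v) := by
    rw [← ha2, ← hb2, ← hr2, hD_def]; ring
  constructor
  · intro hcase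
    rw [div_le_div_iff₀ (by linarith : (0:ℝ) < N + P) hD0]
    have hXgoal : N * (Q - N - P) * D ≤
        (-(a ^ 2 * s * r ^ 2) + (b ^ 2 + 2 * ρ3 * (a * b)) * (D - s) + a ^ 2 * D * (1 - v))
          * (N + P) := by
      rw [← ha2, ← hb2]
      rw [← mul_le_mul_iff_left₀ hM0]
      have id1 : (b - r * a) ^ 2 * (N + a ^ 2) - (b ^ 2 - N - a ^ 2) * M
          = (N + a ^ 2 - r * a * b) ^ 2 := by rw [hM_def]; ring
      have hNa : (0:ℝ) < N + a ^ 2 := by positivity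
      calc N * (b ^ 2 - N - a ^ 2) * D * M
          = (b ^ 2 - N - a ^ 2) * M * (D * N) := by ring
        _ ≤ (b - r * a) ^ 2 * (N + a ^ 2) * (D * N) := by
            have idc : (b - r * a) ^ 2 * (N + a ^ 2) * (D * N)
                - (b ^ 2 - N - a ^ 2) * M * (D * N)
                = (D * N) * (N + a ^ 2 - r * a * b) ^ 2 := by rw [hM_def]; ring
            have hnn : 0 ≤ (D * N) * (N + a ^ 2 - r * a * b) ^ 2 :=
              mul_nonneg (mul_nonneg hD0.le hN.le) (sq_nonneg _)
            linarith [idc, hnn]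
        _ ≤ (b - r * a) ^ 2 * (N + a ^ 2) * ((D - s) * M) := by
            apply mul_le_mul_of_nonneg_left hDsM (by positivity)
        _ = ((b - r * a) ^ 2 * (D - s)) * ((N + a ^ 2) * M) := by ring
        _ ≤ (-(a ^ 2 * s * r ^ 2) + (b ^ 2 + 2 * ρ3 * (a * b)) * (D - s) + a ^ 2 * D * (1 - v))
              * ((N + a ^ 2) * M) := by
            apply mul_le_mul_of_nonneg_right hXG (by positivity)
        _ = (-(a ^ 2 * s * r ^ 2) + (b ^ 2 + 2 * ρ3 * (a * b)) * (D - s) + a ^ 2 * D * (1 - v))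
              * (N + a ^ 2) * M := by ring
    calc N * (Q - N - P) * D ≤ _ := hXgoal
      _ = (-(P * s * ρ3 ^ 2) - (Q + 2 * ρ3 * (a * b)) * (-1 + s + ρ4 ^ 2) + P * D * (1 - v))
            * (N + P) := by rw [hXg]
  · intro hcase
    rw [le_div_iff₀ hD0]
    have hab' : a * b < N + a ^ 2 := by
      have h1 : (a * b) ^ 2 < (N + P) ^ 2 := by
        rw [show (a * b) ^ 2 = P * Q by rw [mul_pow, ha2, hb2]]
        linarith [hcase]
      have h2 : a * b < N + P := lt_of_pow_lt_pow_left₀ 2 (by positivity) h1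
      rw [ha2]; linarith
    have id2 : (b - r * a) ^ 2 * N - (b - a) ^ 2 * M
        = a * (1 - r) * (2 * (b - a) * (N - (a * b - a ^ 2)) + a * (1 - r) * (N + (b - a) ^ 2)) := by
      rw [hM_def]; ring
    have hBM : (b - a) ^ 2 * M ≤ (b - r * a) ^ 2 * N := by
      have t1 : 0 ≤ 2 * (b - a) * (N - (a * b - a ^ 2)) := by nlinarith
      have t2 : 0 ≤ a * (1 - r) * (N + (b - a) ^ 2) := by
        apply mul_nonneg (mul_nonneg ha0.le (by linarith)) (by positivity)
      nlinarith [mul_nonneg (mul_nonneg ha0.le (show (0:ℝ) ≤ 1 - r by linarith)) (add_nonneg t1 t2)]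
    have hcore : (b - a) ^ 2 * D ≤
        -(a ^ 2 * s * r ^ 2) + (b ^ 2 + 2 * ρ3 * (a * b)) * (D - s) + a ^ 2 * D * (1 - v) := by
      rw [← mul_le_mul_iff_left₀ hM0]
      calc (b - a) ^ 2 * D * M = ((b - a) ^ 2 * M) * D := by ring
        _ ≤ ((b - r * a) ^ 2 * N) * D := mul_le_mul_of_nonneg_right hBM hD0.le
        _ = (b - r * a) ^ 2 * (D * N) := by ring
        _ ≤ (b - r * a) ^ 2 * ((D - s) * M) := by
            apply mul_le_mul_of_nonneg_left hDsM (sq_nonneg _)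
        _ = ((b - r * a) ^ 2 * (D - s)) * M := by ring
        _ ≤ (-(a ^ 2 * s * r ^ 2) + (b ^ 2 + 2 * ρ3 * (a * b)) * (D - s) + a ^ 2 * D * (1 - v))
              * M := mul_le_mul_of_nonneg_right hXG hM0.le
    calc (b - a) ^ 2 * D ≤ _ := hcore
      _ = -(P * s * ρ3 ^ 2) - (Q + 2 * ρ3 * (a * b)) * (-1 + s + ρ4 ^ 2) + P * D * (1 - v) := by
          rw [hXg]
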